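/- For fixed s ∈ [0,T] and Δ > 0, the unique minimizer of L(l) = (1/(2α))∫ₛᵀ lₜ² dt + (1/(2Λ))∫ₛᵀ (∫ₜᵀ lᵤ du)² dt + ((s∧Δ)/(2Λ))(1 - ∫ₛᵀ lᵤ du)² over l ∈ L²([s,T]) is l̂ₜ = ρ(s∧Δ)·cosh(√ρ(T-t)) / (cosh(√ρ(T-s)) + √ρ(s∧Δ)·sinh(√ρ(T-s))), and the minimum value equals (1/(2Λ))·(s∧Δ)/(1 + (s∧Δ)√ρ·tanh(√ρ(T-s))). -/

import Mathlib

open Real MeasureTheory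

lemma ftc_cosh (r T a b : ℝ) (hr : 0 < r) :
    ∫ u in a..b, Real.cosh (r * (T - u)) =
      (Real.sinh (r * (T - a)) - Real.sinh (r * (T - b))) / r := by
  have h : ∀ u : ℝ, HasDerivAt (fun u => -Real.sinh (r * (T - u)) / r)
      (Real.cosh (r * (T - u))) u := by
    intro u
    have h1 : HasDerivAt (fun u : ℝ => r * (T - u)) (-r) u := by
      simpa using ((hasDerivAt_id u).const_sub T).const_mul r
    have h2 := (Real.hasDerivAt_sinh (r * (T - u))).comp u h1
    have h3 := (h2.neg).div_const r
    exact h3.congr_deriv (by field_simp)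
  rw [intervalIntegral.integral_eq_sub_of_hasDerivAt (fun u _ => h u)
    (Continuous.intervalIntegrable (by continuity) a b)]
  ring

lemma ftc_sinh (r T a b : ℝ) (hr : 0 < r) :
    ∫ u in a..b, Real.sinh (r * (T - u)) =
      (Real.cosh (r * (T - a)) - Real.cosh (r * (T - b))) / r := by
  have h : ∀ u : ℝ, HasDerivAt (fun u => Real.cosh (r * (T - u)) / r)
      (-Real.sinh (r * (T - u))) u := by
    intro u
    have h1 : HasDerivAt (fun u : ℝ => r * (T - u)) (-r) u := by
      simpa using ((hasDerivAt_id u).const_sub T).const_mul r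
    have h2 := (Real.hasDerivAt_cosh (r * (T - u))).comp u h1
    have h3 := h2.div_const r
    exact h3.congr_deriv (by field_simp)
  have hc : Continuous fun u => -Real.sinh (r * (T - u)) := by continuity
  have := intervalIntegral.integral_eq_sub_of_hasDerivAt (fun u (_ : u ∈ Set.uIcc a b) => h u)
    (hc.intervalIntegrable a b)
  have h4 : ∫ u in a..b, Real.sinh (r * (T - u)) =
      -∫ u in a..b, -Real.sinh (r * (T - u)) := by
    rw [intervalIntegral.integral_neg]; ring
  rw [h4, this]; ring

lemma tri {s T : ℝ} (hsT : s ≤ T) {f g : ℝ → ℝ} (hf : IntegrableOn f (Set.Icc s T))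
    (hg : Continuous g) :
    ∫ t in s..T, g t * (∫ u in t..T, f u) = ∫ u in s..T, (∫ t in s..u, g t) * f u := by
  set μ : Measure ℝ := volume.restrict (Set.Ioc s T) with hμ
  have hfμ : Integrable f μ := hf.mono_set Set.Ioc_subset_Icc_self
  have hgμ : Integrable g μ := (hg.integrableOn_Icc).mono_set Set.Ioc_subset_Icc_self
  set F : ℝ × ℝ → ℝ := Set.indicator {q : ℝ × ℝ | q.1 ≤ q.2} (fun q => g q.1 * f q.2) with hF
  have hmS : MeasurableSet {q : ℝ × ℝ | q.1 ≤ q.2} :=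
    measurableSet_le measurable_fst measurable_snd
  have hFint : Integrable F (μ.prod μ) := (hgμ.mul_prod hfμ).indicator hmS
  have swap := integral_integral_swap (f := fun t u => F (t, u)) (μ := μ) (ν := μ) hFint
  -- LHS
  have hL : (∫ t, ∫ u, F (t, u) ∂μ ∂μ) = ∫ t in s..T, g t * (∫ u in t..T, f u) := by
    rw [intervalIntegral.integral_of_le hsT]
    apply setIntegral_congr_fun measurableSet_Ioc
    intro t ht
    dsimp only
    have h1 : (fun u => F (t, u)) = Set.indicator (Set.Ici t) (fun u => g t * f u) := by
      funext u
      simp only [hF, Set.indicator_apply, Set.mem_setOf_eq, Set.mem_Ici]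
    rw [h1, integral_indicator measurableSet_Ici, hμ, Measure.restrict_restrict measurableSet_Ici]
    have h2 : Set.Ici t ∩ Set.Ioc s T = Set.Icc t T := by
      ext u; simp only [Set.mem_inter_iff, Set.mem_Ici, Set.mem_Ioc, Set.mem_Icc]
      constructor
      · rintro ⟨h3, h4, h5⟩; exact ⟨h3, h5⟩
      · rintro ⟨h3, h4⟩; exact ⟨h3, lt_of_lt_of_le ht.1 h3, h4⟩
    rw [h2, MeasureTheory.integral_const_mul, setIntegral_congr_set Ioc_ae_eq_Icc.symm,
      ← intervalIntegral.integral_of_le ht.2]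
  -- RHS
  have hR : (∫ u, ∫ t, F (t, u) ∂μ ∂μ) = ∫ u in s..T, (∫ t in s..u, g t) * f u := by
    rw [intervalIntegral.integral_of_le hsT]
    apply setIntegral_congr_fun measurableSet_Ioc
    intro u hu
    dsimp only
    have h1 : (fun t => F (t, u)) = Set.indicator (Set.Iic u) (fun t => g t * f u) := by
      funext t
      simp only [hF, Set.indicator_apply, Set.mem_setOf_eq, Set.mem_Iic]
    rw [h1, integral_indicator measurableSet_Iic, hμ, Measure.restrict_restrict measurableSet_Iic]
    have h2 : Set.Iic u ∩ Set.Ioc s T = Set.Ioc s u := by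
      ext t; simp only [Set.mem_inter_iff, Set.mem_Iic, Set.mem_Ioc]
      constructor
      · rintro ⟨h3, h4, h5⟩; exact ⟨h4, h3⟩
      · rintro ⟨h3, h4⟩; exact ⟨h4, h3, le_trans h4 hu.2⟩
    rw [h2, MeasureTheory.integral_mul_const, ← intervalIntegral.integral_of_le hu.1.le]
  rw [← hL, swap, hR]

lemma bddmul {a b : ℝ} {g h : ℝ → ℝ} (hg : Continuous g) (hh : IntegrableOn h (Set.Icc a b)) :
    IntegrableOn (fun x => g x * h x) (Set.Icc a b) := by
  rcases isCompact_Icc.exists_bound_of_continuousOn hg.continuousOn with ⟨Cb, hCb⟩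
  exact Integrable.bdd_mul hh (hg.aestronglyMeasurable.restrict)
    ((ae_restrict_mem measurableSet_Icc).mono fun x hx => hCb x hx)

lemma memLp_of_cont {a b : ℝ} {g : ℝ → ℝ} (hg : Continuous g) :
    MemLp g 2 (volume.restrict (Set.Icc a b)) := by
  haveI : IsFiniteMeasure (volume.restrict (Set.Icc a b)) :=
    ⟨by rw [Measure.restrict_apply_univ]; exact measure_Icc_lt_top⟩
  rcases isCompact_Icc.exists_bound_of_continuousOn hg.continuousOn with ⟨Cb, hCb⟩
  exact MemLp.of_bound hg.aestronglyMeasurable.restrict Cb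
    ((ae_restrict_mem measurableSet_Icc).mono fun x hx => hCb x hx)

set_option maxHeartbeats 2000000 in
theorem stmt1 (T α Λ Δ s : ℝ) (hT : 0 < T) (hα : 0 < α) (hΛ : 0 < Λ) (hΔ : 0 < Δ)
    (hs : s ∈ Set.Icc (0:ℝ) T) :
    let ρ := α / Λ
    let L : (ℝ → ℝ) → ℝ := fun l =>
      (1 / (2 * α)) * (∫ t in s..T, (l t) ^ 2)
        + (1 / (2 * Λ)) * (∫ t in s..T, (∫ u in t..T, l u) ^ 2)
        + (min s Δ) / (2 * Λ) * (1 - ∫ u in s..T, l u) ^ 2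
    let lhat : ℝ → ℝ := fun t =>
      ρ * (min s Δ) * Real.cosh (Real.sqrt ρ * (T - t)) /
        (Real.cosh (Real.sqrt ρ * (T - s))
          + Real.sqrt ρ * (min s Δ) * Real.sinh (Real.sqrt ρ * (T - s)))
    (L lhat = (1 / (2 * Λ)) * (min s Δ)
        / (1 + (min s Δ) * Real.sqrt ρ * Real.tanh (Real.sqrt ρ * (T - s)))) ∧
    ∀ l : ℝ → ℝ,
      MemLp l 2 (volume.restrict (Set.Icc s T)) →
      (L lhat ≤ L l) ∧
      (L l = L lhat → ∀ᵐ t ∂(volume.restrict (Set.Icc s T)), l t = lhat t) := by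
  obtain ⟨hs0, hsT⟩ := hs
  intro ρ L lhat
  have hρdef : ρ = α / Λ := rfl
  have hρ : 0 < ρ := div_pos hα hΛ
  set m := min s Δ with hm_def
  have hm0 : 0 ≤ m := le_min hs0 hΔ.le
  set r := Real.sqrt ρ with hr_def
  have hr : 0 < r := Real.sqrt_pos.2 hρ
  have hr2 : r ^ 2 = ρ := Real.sq_sqrt hρ.le
  have hr2' : r ^ 2 = α / Λ := by rw [hr2, hρdef]
  have hαr : α = Λ * r ^ 2 := by rw [hr2']; field_simp
  have hch : 0 < Real.cosh (r * (T - s)) := Real.cosh_pos _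
  have hsh : 0 ≤ Real.sinh (r * (T - s)) :=
    Real.sinh_nonneg_iff.2 (mul_nonneg hr.le (sub_nonneg.2 hsT))
  set D := Real.cosh (r * (T - s)) + r * m * Real.sinh (r * (T - s)) with hD_def
  have hD : 0 < D := by
    rw [hD_def]
    exact add_pos_of_pos_of_nonneg hch (mul_nonneg (mul_nonneg hr.le hm0) hsh)
  set C := ρ * m / D with hC_def
  have hlhat : ∀ t, lhat t = C * Real.cosh (r * (T - t)) := by
    intro t
    show ρ * m * Real.cosh (r * (T - t)) / D = C * Real.cosh (r * (T - t))
    rw [hC_def]; ring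
  have hcos : ∀ c : ℝ, Continuous fun t : ℝ => Real.cosh (c * (T - t)) := fun c =>
    Real.continuous_cosh.comp (continuous_const.mul (continuous_const.sub continuous_id))
  have hsin : ∀ c : ℝ, Continuous fun t : ℝ => Real.sinh (c * (T - t)) := fun c =>
    Real.continuous_sinh.comp (continuous_const.mul (continuous_const.sub continuous_id))
  have hlhatcont : Continuous lhat := by
    have he : lhat = fun t => C * Real.cosh (r * (T - t)) := funext hlhat
    rw [he]; exact continuous_const.mul (hcos r)
  set Fh : ℝ → ℝ := fun t => C / r * Real.sinh (r * (T - t)) with hFh_def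
  have hFhcont : Continuous Fh := by rw [hFh_def]; exact continuous_const.mul (hsin r)
  have hFhdef : ∀ a : ℝ, (∫ u in a..T, lhat u) = Fh a := by
    intro a
    rw [intervalIntegral.integral_congr (g := fun u => C * Real.cosh (r * (T - u)))
      (fun u _ => hlhat u), intervalIntegral.integral_const_mul, ftc_cosh r T a T hr]
    simp only [hFh_def, sub_self, mul_zero, Real.sinh_zero]
    ring
  set Φ : ℝ → ℝ := fun u => C / ρ * (Real.cosh (r * (T - s)) - Real.cosh (r * (T - u)))
    with hΦ_def
  have hΦcont : Continuous Φ := by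
    rw [hΦ_def]; exact continuous_const.mul (continuous_const.sub (hcos r))
  have hΦ : ∀ u : ℝ, (∫ t in s..u, Fh t) = Φ u := by
    intro u
    rw [intervalIntegral.integral_congr (g := fun t => C / r * Real.sinh (r * (T - t)))
      (fun t _ => rfl), intervalIntegral.integral_const_mul, ftc_sinh r T s u hr]
    simp only [hΦ_def]
    rw [← hr2]
    ring
  have hK : ∀ u : ℝ, (1/α) * lhat u + (1/Λ) * Φ u - (m/Λ) * (1 - Fh s) = 0 := by
    intro u
    rw [hlhat u]
    simp only [hΦ_def, hFh_def, hC_def, hD_def]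
    rw [← hr2, hαr]
    have hDne : Real.cosh (r * (T - s)) + r * m * Real.sinh (r * (T - s)) ≠ 0 := by
      rw [hD_def] at hD; exact hD.ne'
    field_simp
    ring
  have hIccInt : ∀ {f : ℝ → ℝ} {a b : ℝ}, a ≤ b → IntegrableOn f (Set.Icc a b) →
      IntervalIntegrable f volume a b := by
    intro f a b hab hf
    have : IntegrableOn f (Set.uIcc a b) := by rwa [Set.uIcc_of_le hab]
    exact this.intervalIntegrable
  -- cross term vanishes
  have cross0 : ∀ h : ℝ → ℝ, IntegrableOn h (Set.Icc s T) →
      (1/α) * (∫ t in s..T, lhat t * h t)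
        + (1/Λ) * (∫ t in s..T, Fh t * (∫ u in t..T, h u))
        - (m/Λ) * (1 - Fh s) * (∫ u in s..T, h u) = 0 := by
    intro h hh
    have i3 : IntervalIntegrable h volume s T := hIccInt hsT hh
    have i1 : IntervalIntegrable (fun t => lhat t * h t) volume s T :=
      hIccInt hsT (bddmul hlhatcont hh)
    have i2 : IntervalIntegrable (fun t => Φ t * h t) volume s T :=
      hIccInt hsT (bddmul hΦcont hh)
    have htri := tri hsT hh hFhcont
    have h2 : (∫ u in s..T, (∫ t in s..u, Fh t) * h u) = ∫ u in s..T, Φ u * h u :=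
      intervalIntegral.integral_congr (fun u _ => by rw [hΦ u])
    have hz : (∫ u in s..T, ((1/α) * (lhat u * h u)
        + ((1/Λ) * (Φ u * h u) - ((m/Λ) * (1 - Fh s)) * h u))) = 0 := by
      rw [intervalIntegral.integral_congr (g := fun _ => (0:ℝ))
        (fun u _ => by
          have e : (1/α) * (lhat u * h u) + ((1/Λ) * (Φ u * h u) - ((m/Λ) * (1 - Fh s)) * h u)
              = ((1/α) * lhat u + (1/Λ) * Φ u - (m/Λ) * (1 - Fh s)) * h u := by ring
          rw [e, hK u, zero_mul])]
      simp
    rw [intervalIntegral.integral_add (i1.const_mul _) ((i2.const_mul _).sub (i3.const_mul _)),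
        intervalIntegral.integral_sub (i2.const_mul _) (i3.const_mul _),
        intervalIntegral.integral_const_mul, intervalIntegral.integral_const_mul,
        intervalIntegral.integral_const_mul] at hz
    rw [htri, h2]
    linarith [hz]
  have hlhatInt : IntegrableOn lhat (Set.Icc s T) := hlhatcont.continuousOn.integrableOn_Icc
  have hFs : 1 - Fh s = Real.cosh (r * (T - s)) / D := by
    simp only [hFh_def, hC_def, hD_def]
    rw [← hr2]
    have hDne : Real.cosh (r * (T - s)) + r * m * Real.sinh (r * (T - s)) ≠ 0 := by
      rw [hD_def] at hD; exact hD.ne'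
    field_simp
    ring
  have hmin1 : (1/α) * (∫ t in s..T, (lhat t) ^ 2) + (1/Λ) * (∫ t in s..T, (Fh t) ^ 2)
      = (m/Λ) * (1 - Fh s) * (Fh s) := by
    have hc := cross0 lhat hlhatInt
    rw [intervalIntegral.integral_congr (f := fun t => lhat t * lhat t)
        (g := fun t => (lhat t) ^ 2) (fun t _ => by ring),
      intervalIntegral.integral_congr (f := fun t => Fh t * (∫ u in t..T, lhat u))
        (g := fun t => (Fh t) ^ 2) (fun t _ => by dsimp only; rw [hFhdef t]; ring),
      hFhdef s] at hc
    linarith [hc]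
  have hLlhat0 : L lhat = (1/(2*α)) * (∫ t in s..T, (lhat t) ^ 2)
      + (1/(2*Λ)) * (∫ t in s..T, (Fh t) ^ 2) + m/(2*Λ) * (1 - Fh s) ^ 2 := by
    have hLl : L lhat = (1 / (2 * α)) * (∫ t in s..T, (lhat t) ^ 2)
        + (1 / (2 * Λ)) * (∫ t in s..T, (∫ u in t..T, lhat u) ^ 2)
        + m / (2 * Λ) * (1 - ∫ u in s..T, lhat u) ^ 2 := rfl
    rw [hLl, intervalIntegral.integral_congr (f := fun t => (∫ u in t..T, lhat u) ^ 2)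
      (g := fun t => (Fh t) ^ 2) (fun t _ => by dsimp only; rw [hFhdef t]), hFhdef s]
  have hLlhat : L lhat = m/(2*Λ) * (1 - Fh s) := by
    rw [hLlhat0]
    linear_combination (1/2) * hmin1
  have conj1 : L lhat = (1 / (2 * Λ)) * m / (1 + m * r * Real.tanh (r * (T - s))) := by
    rw [hLlhat, hFs, Real.tanh_eq_sinh_div_cosh, hD_def]
    have h1 : Real.cosh (r * (T - s)) + r * m * Real.sinh (r * (T - s)) ≠ 0 := by
      rw [hD_def] at hD; exact hD.ne'
    field_simp
  refine ⟨conj1, ?_⟩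
  intro l hl
  haveI : IsFiniteMeasure (volume.restrict (Set.Icc s T)) :=
    ⟨by rw [Measure.restrict_apply_univ]; exact measure_Icc_lt_top⟩
  set h : ℝ → ℝ := fun t => l t - lhat t with hh_def
  have hhMem : MemLp h 2 (volume.restrict (Set.Icc s T)) := hl.sub (memLp_of_cont hlhatcont)
  have hhInt : IntegrableOn h (Set.Icc s T) := hhMem.integrable one_le_two
  have hh2Int : IntegrableOn (fun t => (h t) ^ 2) (Set.Icc s T) := hhMem.integrable_sq
  have ih2 : IntervalIntegrable (fun t => (h t) ^ 2) volume s T := hIccInt hsT hh2Int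
  have ilh : IntervalIntegrable (fun t => lhat t * h t) volume s T :=
    hIccInt hsT (bddmul hlhatcont hhInt)
  have ilhat2 : IntervalIntegrable (fun t => (lhat t) ^ 2) volume s T :=
    ((hlhatcont.pow 2).continuousOn).intervalIntegrable
  set H : ℝ → ℝ := fun t => ∫ u in t..T, h u with hH_def
  have HeqOn : ∀ t ∈ Set.Icc s T, H t = (∫ u in s..T, h u) - ∫ u in s..t, h u := by
    intro t ht
    have iab : IntervalIntegrable h volume s t :=
      hIccInt ht.1 (hhInt.mono_set (Set.Icc_subset_Icc le_rfl ht.2))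
    have itT : IntervalIntegrable h volume t T :=
      hIccInt ht.2 (hhInt.mono_set (Set.Icc_subset_Icc ht.1 le_rfl))
    rw [hH_def, ← intervalIntegral.integral_add_adjacent_intervals iab itT]
    ring
  have HcontOn : ContinuousOn H (Set.Icc s T) := by
    have hprim : ContinuousOn (fun t => ∫ u in s..t, h u) (Set.Icc s T) := by
      have h1 : IntegrableOn h (Set.uIcc s T) := by rwa [Set.uIcc_of_le hsT]
      have := intervalIntegral.continuousOn_primitive_interval h1
      rwa [Set.uIcc_of_le hsT] at this
    exact (continuousOn_const.sub hprim).congr HeqOn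
  have iH2 : IntervalIntegrable (fun t => (H t) ^ 2) volume s T :=
    hIccInt hsT ((HcontOn.pow 2).integrableOn_Icc)
  have iFhH : IntervalIntegrable (fun t => Fh t * H t) volume s T :=
    hIccInt hsT ((hFhcont.continuousOn.mul HcontOn).integrableOn_Icc)
  have iFh2 : IntervalIntegrable (fun t => (Fh t) ^ 2) volume s T :=
    ((hFhcont.pow 2).continuousOn).intervalIntegrable
  have hsplit : ∀ t ∈ Set.Icc s T, (∫ u in t..T, l u) = Fh t + H t := by
    intro t ht
    have il : IntervalIntegrable lhat volume t T := hlhatcont.intervalIntegrable t T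
    have ihh : IntervalIntegrable h volume t T :=
      hIccInt ht.2 (hhInt.mono_set (Set.Icc_subset_Icc ht.1 le_rfl))
    rw [intervalIntegral.integral_congr (g := fun u => lhat u + h u)
        (fun u _ => by dsimp only; simp only [hh_def]; ring),
      intervalIntegral.integral_add il ihh, hFhdef t]
  have e1 : (∫ t in s..T, (l t) ^ 2)
      = (∫ t in s..T, (lhat t) ^ 2) + (2 * (∫ t in s..T, lhat t * h t)
        + ∫ t in s..T, (h t) ^ 2) := by
    rw [intervalIntegral.integral_congr
        (g := fun t => (lhat t) ^ 2 + (2 * (lhat t * h t) + (h t) ^ 2))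
        (fun t _ => by dsimp only; simp only [hh_def]; ring),
      intervalIntegral.integral_add ilhat2 ((ilh.const_mul 2).add ih2),
      intervalIntegral.integral_add (ilh.const_mul 2) ih2,
      intervalIntegral.integral_const_mul]
  have e2 : (∫ t in s..T, (∫ u in t..T, l u) ^ 2)
      = (∫ t in s..T, (Fh t) ^ 2) + (2 * (∫ t in s..T, Fh t * H t)
        + ∫ t in s..T, (H t) ^ 2) := by
    rw [intervalIntegral.integral_congr
        (g := fun t => (Fh t) ^ 2 + (2 * (Fh t * H t) + (H t) ^ 2))
        (fun t ht => by dsimp only; rw [hsplit t (by rwa [Set.uIcc_of_le hsT] at ht)]; ring),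
      intervalIntegral.integral_add iFh2 ((iFhH.const_mul 2).add iH2),
      intervalIntegral.integral_add (iFhH.const_mul 2) iH2,
      intervalIntegral.integral_const_mul]
  have e3 : (∫ u in s..T, l u) = Fh s + H s := hsplit s ⟨le_rfl, hsT⟩
  have hc2 : (1/α) * (∫ t in s..T, lhat t * h t) + (1/Λ) * (∫ t in s..T, Fh t * H t)
      - (m/Λ) * (1 - Fh s) * (H s) = 0 := cross0 h hhInt
  have keyL : L l = L lhat + ((1/(2*α)) * (∫ t in s..T, (h t) ^ 2)
      + (1/(2*Λ)) * (∫ t in s..T, (H t) ^ 2) + m/(2*Λ) * (H s) ^ 2) := by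
    have hLl : L l = (1 / (2 * α)) * (∫ t in s..T, (l t) ^ 2)
        + (1 / (2 * Λ)) * (∫ t in s..T, (∫ u in t..T, l u) ^ 2)
        + m / (2 * Λ) * (1 - ∫ u in s..T, l u) ^ 2 := rfl
    rw [hLl, e1, e2, e3, hLlhat0]
    linear_combination hc2
  have hA2 : 0 ≤ ∫ t in s..T, (h t) ^ 2 :=
    intervalIntegral.integral_nonneg hsT (fun u _ => sq_nonneg _)
  have hB2 : 0 ≤ ∫ t in s..T, (H t) ^ 2 :=
    intervalIntegral.integral_nonneg hsT (fun u _ => sq_nonneg _)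
  have hq1 : 0 ≤ (1/(2*α)) * (∫ t in s..T, (h t) ^ 2) := by positivity
  have hq2 : 0 ≤ (1/(2*Λ)) * (∫ t in s..T, (H t) ^ 2) := by positivity
  have hq3 : 0 ≤ m/(2*Λ) * (H s) ^ 2 :=
    mul_nonneg (div_nonneg hm0 (by positivity)) (sq_nonneg _)
  constructor
  · rw [keyL]; linarith
  · intro heq
    have hQ : (1/(2*α)) * (∫ t in s..T, (h t) ^ 2)
        + (1/(2*Λ)) * (∫ t in s..T, (H t) ^ 2) + m/(2*Λ) * (H s) ^ 2 = 0 := by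
      rw [keyL] at heq; linarith
    have hA2' : (1/(2*α)) * (∫ t in s..T, (h t) ^ 2) = 0 := by linarith
    have hA2z : (∫ t in s..T, (h t) ^ 2) = 0 := by
      rcases mul_eq_zero.1 hA2' with h1 | h1
      · exfalso; have : (0:ℝ) < 1/(2*α) := by positivity
        linarith
      · exact h1
    rw [intervalIntegral.integral_of_le hsT] at hA2z
    have hae := (integral_eq_zero_iff_of_nonneg (fun t => sq_nonneg (h t))
      (hh2Int.mono_set Set.Ioc_subset_Icc_self)).1 hA2z
    rw [Measure.restrict_congr_set Ioc_ae_eq_Icc] at hae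
    filter_upwards [hae] with t ht
    have h0 : h t = 0 := by
      have ht' : (h t) ^ 2 = 0 := ht
      exact (pow_eq_zero_iff two_ne_zero).mp ht'
    have h1 : l t - lhat t = 0 := h0
    exact sub_eq_zero.mp h1
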